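/- In the zero-sum case U¹ = −U² = U, for every ε > 0, let (ρ₀^ε, τ₀^ε) be an ε-saddle point for the Dynkin game with payoff V(ρ₀,τ₀) := E[X_{ρ₀}1_{ρ₀<τ₀} + Y_{τ₀}1_{ρ₀>τ₀} + Z_{ρ₀}1_{ρ₀=τ₀}], and let h > 0 be small enough that X_{ρ₀} > E[U(ρ₀,τ_h(ρ₀))|𝓕_{ρ₀}] − 2ε and Y_{τ₀} < E[U(ρ_h(τ₀),τ₀)|𝓕_{τ₀}] + 2ε for all ρ₀,τ₀ ∈ 𝒯. Then (ρ^ε, τ^ε) := ((ρ₀^ε, ρ_h), (τ₀^ε, τ_h)) is a 5ε-Nash equilibrium for the game u¹(ρ,τ) = E[U(ρ[τ],τ[ρ])] = −u²(ρ,τ): for all ρ,τ ∈ 𝔗, u¹(ρ, τ^ε) ≤ u¹(ρ^ε, τ^ε) + 5ε and u²(ρ^ε, τ) ≤ u²(ρ^ε, τ^ε) + 5ε. -/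

import Mathlib

/-!
Common setup for "On the non-zero-sum stopping game ending at the maximum of the stopping
strategies".  Time is indexed by `[0,∞] = ℝ≥0∞`.  Since `Ω` is at most countable and `ℙ`
charges every point, essential suprema/infima over families of stopping times coincide with
the pointwise ones, which is how they are formalized below.
-/

open MeasureTheory Filter Set
open scoped ENNReal Topology

noncomputable section

namespace StoppingGames

variable {Ω : Type*} [mΩ : MeasurableSpace Ω]

/-- `|a - b|` on `[0,∞]`, via truncated subtraction. -/
def dd (a b : ℝ≥0∞) : ℝ≥0∞ := (a - b) + (b - a)

/-- `𝒯`, the set of stopping times with values in `[0,∞]`. -/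
def ST (𝓕 : Filtration ℝ≥0∞ mΩ) : Set (Ω → ℝ≥0∞) := {τ | IsStoppingTime 𝓕 (fun ω => (τ ω : WithTop ℝ≥0∞))}

/-- `𝒯_σ`, the stopping times no less than `σ`. -/
def STge (𝓕 : Filtration ℝ≥0∞ mΩ) (σ : Ω → ℝ≥0∞) : Set (Ω → ℝ≥0∞) :=
  {τ | IsStoppingTime 𝓕 (fun ω => (τ ω : WithTop ℝ≥0∞)) ∧ ∀ ω, σ ω ≤ τ ω}

/-- `𝒯_{t+}`, the stopping times strictly greater than `t`. -/
def STgt (𝓕 : Filtration ℝ≥0∞ mΩ) (t : ℝ≥0∞) : Set (Ω → ℝ≥0∞) :=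
  {τ | IsStoppingTime 𝓕 (fun ω => (τ ω : WithTop ℝ≥0∞)) ∧ ∀ ω, t < τ ω}

/-- The class `𝕋` of jointly measurable maps `φ : [0,∞] × Ω → [0,∞]` with
`φ(t,·) ∈ 𝒯_{t+}` for every finite `t`. -/
def IsTT (𝓕 : Filtration ℝ≥0∞ mΩ) (φ : ℝ≥0∞ → Ω → ℝ≥0∞) : Prop :=
  Measurable (Function.uncurry φ) ∧ ∀ t : ℝ≥0∞, t ≠ ∞ → φ t ∈ STgt 𝓕 t

/-- A stopping strategy `ρ = (ρ₀, ρ₁) ∈ 𝔗`. -/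
def IsStrategy (𝓕 : Filtration ℝ≥0∞ mΩ) (ρ : (Ω → ℝ≥0∞) × (ℝ≥0∞ → Ω → ℝ≥0∞)) : Prop :=
  IsStoppingTime 𝓕 (fun ω => (ρ.1 ω : WithTop ℝ≥0∞)) ∧ IsTT 𝓕 ρ.2

/-- `𝔗_σ`, the stopping strategies whose first component is `≥ σ`. -/
def IsStrategyGe (𝓕 : Filtration ℝ≥0∞ mΩ) (σ : Ω → ℝ≥0∞)
    (ρ : (Ω → ℝ≥0∞) × (ℝ≥0∞ → Ω → ℝ≥0∞)) : Prop :=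
  IsStrategy 𝓕 ρ ∧ ∀ ω, σ ω ≤ ρ.1 ω

/-- `ρ[τ] = ρ₀ 1_{ρ₀ ≤ τ₀} + ρ₁(τ₀) 1_{ρ₀ > τ₀}`. -/
def play (ρ τ : (Ω → ℝ≥0∞) × (ℝ≥0∞ → Ω → ℝ≥0∞)) : Ω → ℝ≥0∞ := fun ω =>
  if ρ.1 ω ≤ τ.1 ω then ρ.1 ω else ρ.2 (τ.1 ω) ω

/-- `u(ρ,τ) = E[U(ρ[τ], τ[ρ])]`. -/
def payoff (μ : Measure Ω) (U : ℝ≥0∞ → ℝ≥0∞ → Ω → ℝ)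
    (ρ τ : (Ω → ℝ≥0∞) × (ℝ≥0∞ → Ω → ℝ≥0∞)) : ℝ :=
  ∫ ω, U (play ρ τ ω) (play τ ρ ω) ω ∂μ

/-- `u_σ(ρ,τ) = E[U(ρ[τ], τ[ρ]) | m]`. -/
def condPayoff (μ : Measure Ω) (m : MeasurableSpace Ω) (U : ℝ≥0∞ → ℝ≥0∞ → Ω → ℝ)
    (ρ τ : (Ω → ℝ≥0∞) × (ℝ≥0∞ → Ω → ℝ≥0∞)) : Ω → ℝ :=
  μ[fun ω => U (play ρ τ ω) (play τ ρ ω) ω | m]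

/-- The grid point `n·h ∈ [0,∞]`. -/
def grid (h : ℝ) (n : ℕ) : ℝ≥0∞ := ENNReal.ofReal (n * h)

/-- `⌊t/h⌋ + 1`. -/
def gridIdx (h : ℝ) (t : ℝ≥0∞) : ℕ := ⌊t.toReal / h⌋₊ + 1

/-- `ρ_h(t) := ρ̄((⌊t/h⌋+1)h)` for finite `t`, and `ρ_h(∞) := ∞`. -/
def gridStrat (h : ℝ) (bar : ℕ → Ω → ℝ≥0∞) : ℝ≥0∞ → Ω → ℝ≥0∞ := fun t ω =>
  if t = ∞ then ∞ else bar (gridIdx h t) ω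

/-- Evaluation `φ(σ) : ω ↦ φ(σ(ω), ω)` of a time-indexed family along a random time. -/
def evalAt (φ : ℝ≥0∞ → Ω → ℝ≥0∞) (σ : Ω → ℝ≥0∞) : Ω → ℝ≥0∞ := fun ω => φ (σ ω) ω

/-- `X_t = ess inf_{σ ∈ 𝒯_t} E[U(t,σ) | 𝓕_t]` (pointwise infimum, which coincides with the
essential one since `Ω` is countable and every point is charged). -/
def X1v (μ : Measure Ω) (𝓕 : Filtration ℝ≥0∞ mΩ) (U : ℝ≥0∞ → ℝ≥0∞ → Ω → ℝ)
    (t : ℝ≥0∞) (ω : Ω) : ℝ :=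
  ⨅ σ : STge 𝓕 (fun _ => t), (μ[fun ω' => U t (σ.1 ω') ω' | 𝓕 t]) ω

/-- `Y_t = ess sup_{σ ∈ 𝒯_t} E[U(σ,t) | 𝓕_t]`. -/
def Y1v (μ : Measure Ω) (𝓕 : Filtration ℝ≥0∞ mΩ) (U : ℝ≥0∞ → ℝ≥0∞ → Ω → ℝ)
    (t : ℝ≥0∞) (ω : Ω) : ℝ :=
  ⨆ σ : STge 𝓕 (fun _ => t), (μ[fun ω' => U (σ.1 ω') t ω' | 𝓕 t]) ω

/-- Player 2: `X²_t = ess sup_{σ ∈ 𝒯_t} E[U²(t,σ) | 𝓕_t]`. -/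
def X2v (μ : Measure Ω) (𝓕 : Filtration ℝ≥0∞ mΩ) (U : ℝ≥0∞ → ℝ≥0∞ → Ω → ℝ)
    (t : ℝ≥0∞) (ω : Ω) : ℝ :=
  ⨆ σ : STge 𝓕 (fun _ => t), (μ[fun ω' => U t (σ.1 ω') ω' | 𝓕 t]) ω

/-- Player 2: `Y²_t = ess inf_{σ ∈ 𝒯_t} E[U²(σ,t) | 𝓕_t]`. -/
def Y2v (μ : Measure Ω) (𝓕 : Filtration ℝ≥0∞ mΩ) (U : ℝ≥0∞ → ℝ≥0∞ → Ω → ℝ)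
    (t : ℝ≥0∞) (ω : Ω) : ℝ :=
  ⨅ σ : STge 𝓕 (fun _ => t), (μ[fun ω' => U (σ.1 ω') t ω' | 𝓕 t]) ω

/-- `Z_t = U(t,t)`. -/
def Zv (U : ℝ≥0∞ → ℝ≥0∞ → Ω → ℝ) : ℝ≥0∞ → Ω → ℝ := fun t ω => U t t ω

/-- `X_{ρ₀} 1_{ρ₀ < τ₀} + Y_{τ₀} 1_{ρ₀ > τ₀} + Z_{ρ₀} 1_{ρ₀ = τ₀}`. -/
def dynkinKernel (X Y Z : ℝ≥0∞ → Ω → ℝ) (ρ₀ τ₀ : Ω → ℝ≥0∞) (ω : Ω) : ℝ :=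
  if ρ₀ ω < τ₀ ω then X (ρ₀ ω) ω else if τ₀ ω < ρ₀ ω then Y (τ₀ ω) ω else Z (ρ₀ ω) ω

/-- The Dynkin-game payoff `V(ρ₀,τ₀)`. -/
def dynkinV (μ : Measure Ω) (X Y Z : ℝ≥0∞ → Ω → ℝ) (ρ₀ τ₀ : Ω → ℝ≥0∞) : ℝ :=
  ∫ ω, dynkinKernel X Y Z ρ₀ τ₀ ω ∂μ

/-- The conditional Dynkin-game payoff. -/
def condDynkin (μ : Measure Ω) (m : MeasurableSpace Ω) (X Y Z : ℝ≥0∞ → Ω → ℝ)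
    (ρ₀ τ₀ : Ω → ℝ≥0∞) : Ω → ℝ :=
  μ[fun ω => dynkinKernel X Y Z ρ₀ τ₀ ω | m]

/-- `v_t¹`, the (sup-inf) value of the conditional Dynkin game `G_t¹` with payoffs
`(X¹, Y¹, Z¹)` built from `U¹`. -/
def v1v (μ : Measure Ω) (𝓕 : Filtration ℝ≥0∞ mΩ) (U : ℝ≥0∞ → ℝ≥0∞ → Ω → ℝ)
    (t : ℝ≥0∞) (ω : Ω) : ℝ :=
  ⨆ ρ₀ : STge 𝓕 (fun _ => t), ⨅ τ₀ : STge 𝓕 (fun _ => t),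
    condDynkin μ (𝓕 t) (X1v μ 𝓕 U) (Y1v μ 𝓕 U) (Zv U) ρ₀.1 τ₀.1 ω

/-- `v_t²`, the (inf-sup) value of the conditional Dynkin game `G_t²` with payoffs
`(X², Y², Z²)` built from `U²`. -/
def v2v (μ : Measure Ω) (𝓕 : Filtration ℝ≥0∞ mΩ) (U : ℝ≥0∞ → ℝ≥0∞ → Ω → ℝ)
    (t : ℝ≥0∞) (ω : Ω) : ℝ :=
  ⨅ ρ₀ : STge 𝓕 (fun _ => t), ⨆ τ₀ : STge 𝓕 (fun _ => t),
    condDynkin μ (𝓕 t) (X2v μ 𝓕 U) (Y2v μ 𝓕 U) (Zv U) ρ₀.1 τ₀.1 ω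

/-- `W_t¹ = E[U¹(t, τ_h²(t)) | 𝓕_t]`. -/
def W1v (μ : Measure Ω) (𝓕 : Filtration ℝ≥0∞ mΩ) (U : ℝ≥0∞ → ℝ≥0∞ → Ω → ℝ)
    (h : ℝ) (bar : ℕ → Ω → ℝ≥0∞) (t : ℝ≥0∞) (ω : Ω) : ℝ :=
  (μ[fun ω' => U t (gridStrat h bar t ω') ω' | 𝓕 t]) ω

/-- `W_t² = E[U²(ρ_h¹(t), t) | 𝓕_t]`. -/
def W2v (μ : Measure Ω) (𝓕 : Filtration ℝ≥0∞ mΩ) (U : ℝ≥0∞ → ℝ≥0∞ → Ω → ℝ)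
    (h : ℝ) (bar : ℕ → Ω → ℝ≥0∞) (t : ℝ≥0∞) (ω : Ω) : ℝ :=
  (μ[fun ω' => U (gridStrat h bar t ω') t ω' | 𝓕 t]) ω

/-- `μ₁ = inf {t ≥ 0 : v_t¹ ≤ W_t¹ + ε}`. -/
def mu1T (μ : Measure Ω) (𝓕 : Filtration ℝ≥0∞ mΩ) (U : ℝ≥0∞ → ℝ≥0∞ → Ω → ℝ)
    (h ε : ℝ) (bar : ℕ → Ω → ℝ≥0∞) : Ω → ℝ≥0∞ := fun ω =>
  sInf {t | v1v μ 𝓕 U t ω ≤ W1v μ 𝓕 U h bar t ω + ε}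

/-- `μ₂ = inf {t ≥ 0 : v_t² ≤ W_t² + ε}`. -/
def mu2T (μ : Measure Ω) (𝓕 : Filtration ℝ≥0∞ mΩ) (U : ℝ≥0∞ → ℝ≥0∞ → Ω → ℝ)
    (h ε : ℝ) (bar : ℕ → Ω → ℝ≥0∞) : Ω → ℝ≥0∞ := fun ω =>
  sInf {t | v2v μ 𝓕 U t ω ≤ W2v μ 𝓕 U h bar t ω + ε}

/-- `ρ̄(nh)` is a family of `ε`-optimizers for `Y¹_{nh}`:
`E[U(ρ̄(nh), nh) | 𝓕_{nh}] ≥ Y_{nh} − ε`. -/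
def IsOptRho1 (μ : Measure Ω) (𝓕 : Filtration ℝ≥0∞ mΩ) (U : ℝ≥0∞ → ℝ≥0∞ → Ω → ℝ)
    (ε h : ℝ) (bar : ℕ → Ω → ℝ≥0∞) : Prop :=
  ∀ n : ℕ, bar n ∈ STge 𝓕 (fun _ => grid h n) ∧
    ∀ᵐ ω ∂μ, Y1v μ 𝓕 U (grid h n) ω - ε ≤
      (μ[fun ω' => U (bar n ω') (grid h n) ω' | 𝓕 (grid h n)]) ω

/-- `τ̄(nh)` is a family of `ε`-optimizers for `X¹_{nh}`:
`E[U(nh, τ̄(nh)) | 𝓕_{nh}] ≤ X_{nh} + ε`. -/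
def IsOptTau1 (μ : Measure Ω) (𝓕 : Filtration ℝ≥0∞ mΩ) (U : ℝ≥0∞ → ℝ≥0∞ → Ω → ℝ)
    (ε h : ℝ) (bar : ℕ → Ω → ℝ≥0∞) : Prop :=
  ∀ n : ℕ, bar n ∈ STge 𝓕 (fun _ => grid h n) ∧
    ∀ᵐ ω ∂μ, (μ[fun ω' => U (grid h n) (bar n ω') ω' | 𝓕 (grid h n)]) ω ≤
      X1v μ 𝓕 U (grid h n) ω + ε

/-- `ρ̄²(nh)` is a family of `ε`-optimizers for `Y²_{nh}` (an essential infimum). -/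
def IsOptRho2 (μ : Measure Ω) (𝓕 : Filtration ℝ≥0∞ mΩ) (U : ℝ≥0∞ → ℝ≥0∞ → Ω → ℝ)
    (ε h : ℝ) (bar : ℕ → Ω → ℝ≥0∞) : Prop :=
  ∀ n : ℕ, bar n ∈ STge 𝓕 (fun _ => grid h n) ∧
    ∀ᵐ ω ∂μ, (μ[fun ω' => U (bar n ω') (grid h n) ω' | 𝓕 (grid h n)]) ω ≤
      Y2v μ 𝓕 U (grid h n) ω + ε

/-- `τ̄²(nh)` is a family of `ε`-optimizers for `X²_{nh}` (an essential supremum). -/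
def IsOptTau2 (μ : Measure Ω) (𝓕 : Filtration ℝ≥0∞ mΩ) (U : ℝ≥0∞ → ℝ≥0∞ → Ω → ℝ)
    (ε h : ℝ) (bar : ℕ → Ω → ℝ≥0∞) : Prop :=
  ∀ n : ℕ, bar n ∈ STge 𝓕 (fun _ => grid h n) ∧
    ∀ᵐ ω ∂μ, X2v μ 𝓕 U (grid h n) ω - ε ≤
      (μ[fun ω' => U (grid h n) (bar n ω') ω' | 𝓕 (grid h n)]) ω

/-- The standing assumptions on the filtered probability space: `ℙ` charges every point of the
(countable) `Ω`, the filtration is right continuous (usual conditions; completeness is automatic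
since null sets are empty), and `𝓕 = 𝓕_∞ = ⋃_{t<∞} 𝓕_t`. -/
def UsualSetup (μ : Measure Ω) (𝓕 : Filtration ℝ≥0∞ mΩ) : Prop :=
  (∀ ω : Ω, μ {ω} ≠ 0) ∧
  (∀ t : ℝ≥0∞, (𝓕 t : MeasurableSpace Ω) = ⨅ s ∈ Ioi t, (𝓕 s : MeasurableSpace Ω)) ∧
  ((𝓕 ∞ : MeasurableSpace Ω) = mΩ) ∧
  ((⨆ t ∈ Iio (∞ : ℝ≥0∞), (𝓕 t : MeasurableSpace Ω)) = mΩ)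

/-- The standing assumptions on a payoff `U`: boundedness, `𝓕_{s∨t}`-measurability of `U(s,t)`,
and the uniform-continuity modulus `r` (bounded, nondecreasing, `r(0+) = r(0) = 0`).  Note that
the modulus condition, being imposed on all of `[0,∞]`, encodes that the values at `∞` are the
corresponding limits. -/
def PayoffAssumption (𝓕 : Filtration ℝ≥0∞ mΩ) (U : ℝ≥0∞ → ℝ≥0∞ → Ω → ℝ)
    (r : ℝ≥0∞ → ℝ) : Prop :=
  (∃ M : ℝ, ∀ s t ω, |U s t ω| ≤ M) ∧
  (∀ s t : ℝ≥0∞, Measurable[𝓕 (s ⊔ t)] (U s t)) ∧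
  Monotone r ∧ (∀ x, 0 ≤ r x) ∧ (∃ C : ℝ, ∀ x, r x ≤ C) ∧ r 0 = 0 ∧
  Tendsto r (𝓝[>] (0 : ℝ≥0∞)) (𝓝 (0 : ℝ)) ∧
  (∀ s t s' t' : ℝ≥0∞, ∀ ω, |U s t ω - U s' t' ω| ≤ r (dd s s' + dd t t'))

/-- The values of `U` at `∞` are the limits of the values at finite times. -/
def LimitsAtInfty (U : ℝ≥0∞ → ℝ≥0∞ → Ω → ℝ) : Prop :=
  (∀ s ω, Tendsto (fun b => U s b ω) (𝓝[<] (∞ : ℝ≥0∞)) (𝓝 (U s ∞ ω))) ∧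
  (∀ t ω, Tendsto (fun a => U a t ω) (𝓝[<] (∞ : ℝ≥0∞)) (𝓝 (U ∞ t ω))) ∧
  (∀ ω, Tendsto (fun p : ℝ≥0∞ × ℝ≥0∞ => U p.1 p.2 ω)
    ((𝓝[<] (∞ : ℝ≥0∞)) ×ˢ (𝓝[<] (∞ : ℝ≥0∞))) (𝓝 (U ∞ ∞ ω)))

/-- `ess inf_{σ ∈ 𝒯_v} E[U(s,σ) | 𝓕_v]` for a stopping time `v`. -/
def XatST (μ : Measure Ω) (𝓕 : Filtration ℝ≥0∞ mΩ) (U : ℝ≥0∞ → ℝ≥0∞ → Ω → ℝ)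
    {v : Ω → ℝ≥0∞} (hv : IsStoppingTime 𝓕 (fun ω => (v ω : WithTop ℝ≥0∞))) (s : ℝ≥0∞) (ω : Ω) : ℝ :=
  ⨅ σ : STge 𝓕 v, (μ[fun ω' => U s (σ.1 ω') ω' | hv.measurableSpace]) ω

/-- `X̃_v(s) = ess inf_{σ ∈ 𝒯_v} E[U(s,σ) | 𝓕_v]` for a deterministic time `v`. -/
def Xat (μ : Measure Ω) (𝓕 : Filtration ℝ≥0∞ mΩ) (U : ℝ≥0∞ → ℝ≥0∞ → Ω → ℝ)
    (v s : ℝ≥0∞) (ω : Ω) : ℝ :=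
  ⨅ σ : STge 𝓕 (fun _ => v), (μ[fun ω' => U s (σ.1 ω') ω' | 𝓕 v]) ω

/-- `ρ₀* = μ₁ 1_{μ₁ ≤ μ₂} + ρ²_{μ₂+δ} 1_{μ₁ > μ₂}`. -/
def rhoStar0 (m1 m2 rsad2 : Ω → ℝ≥0∞) : Ω → ℝ≥0∞ := fun ω =>
  if m1 ω ≤ m2 ω then m1 ω else rsad2 ω

/-- `ρ₁*(t) = ρ_h²(t)` if `t ≥ μ₁ ∧ μ₂ + δ` and `μ₁ > μ₂`, else `ρ_h¹(t)`. -/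
def rhoStar1 (m1 m2 : Ω → ℝ≥0∞) (δ : ℝ) (φ1 φ2 : ℝ≥0∞ → Ω → ℝ≥0∞) :
    ℝ≥0∞ → Ω → ℝ≥0∞ := fun t ω =>
  if (m1 ω ⊓ m2 ω) + ENNReal.ofReal δ ≤ t ∧ m2 ω < m1 ω then φ2 t ω else φ1 t ω

/-- `τ₀* = τ¹_{μ₁+δ} 1_{μ₁ ≤ μ₂} + μ₂ 1_{μ₁ > μ₂}`. -/
def tauStar0 (m1 m2 tsad1 : Ω → ℝ≥0∞) : Ω → ℝ≥0∞ := fun ω =>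
  if m1 ω ≤ m2 ω then tsad1 ω else m2 ω

/-- `τ₁*(t) = τ_h¹(t)` if `t ≥ μ₁ ∧ μ₂ + δ` and `μ₁ ≤ μ₂`, else `τ_h²(t)`. -/
def tauStar1 (m1 m2 : Ω → ℝ≥0∞) (δ : ℝ) (ψ1 ψ2 : ℝ≥0∞ → Ω → ℝ≥0∞) :
    ℝ≥0∞ → Ω → ℝ≥0∞ := fun t ω =>
  if (m1 ω ⊓ m2 ω) + ENNReal.ofReal δ ≤ t ∧ m1 ω ≤ m2 ω then ψ1 t ω else ψ2 t ω

section Aux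
set_option linter.unusedSectionVars false


/-- On a countable space, the atom of a σ-algebra containing a point is measurable, and a
function constant on atoms is measurable. -/
lemma measurableSet_preimage_of_rel [Countable Ω] {m : MeasurableSpace Ω} {β : Type*}
    {f : Ω → β}
    (hf : ∀ ω ω', (∀ A : Set Ω, MeasurableSet[m] A → (ω ∈ A → ω' ∈ A)) → f ω = f ω')
    (s : Set β) : MeasurableSet[m] (f ⁻¹' s) := by
  classical
  let atom : Ω → Set Ω := fun ω =>
    ⋂ (ω' : Ω) (h : ∃ A : Set Ω, MeasurableSet[m] A ∧ ω ∈ A ∧ ω' ∉ A), h.choose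
  have hatom_meas : ∀ ω, MeasurableSet[m] (atom ω) := fun ω =>
    MeasurableSet.iInter fun ω' => MeasurableSet.iInter fun h => h.choose_spec.1
  have hatom_self : ∀ ω, ω ∈ atom ω := fun ω =>
    mem_iInter.2 fun ω' => mem_iInter.2 fun h => h.choose_spec.2.1
  have hatom_rel : ∀ ω ω', ω' ∈ atom ω →
      ∀ A : Set Ω, MeasurableSet[m] A → (ω ∈ A → ω' ∈ A) := by
    intro ω ω' hω' A hA hωA
    by_contra hne
    have h : ∃ A : Set Ω, MeasurableSet[m] A ∧ ω ∈ A ∧ ω' ∉ A := ⟨A, hA, hωA, hne⟩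
    have := mem_iInter.1 (mem_iInter.1 hω' ω') h
    exact h.choose_spec.2.2 this
  have : f ⁻¹' s = ⋃ (ω : Ω) (_ : f ω ∈ s), atom ω := by
    ext ω'
    simp only [mem_preimage, mem_iUnion]
    constructor
    · intro h; exact ⟨ω', h, hatom_self ω'⟩
    · rintro ⟨ω, hω, hmem⟩
      rw [← hf ω ω' (hatom_rel ω ω' hmem)]; exact hω
  rw [this]
  exact MeasurableSet.iUnion fun ω => MeasurableSet.iUnion fun _ => hatom_meas ω

lemma measurable_of_rel [Countable Ω] {m : MeasurableSpace Ω} {β : Type*} [MeasurableSpace β]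
    {f : Ω → β}
    (hf : ∀ ω ω', (∀ A : Set Ω, MeasurableSet[m] A → (ω ∈ A → ω' ∈ A)) → f ω = f ω') :
    Measurable[m] f := fun s _ => measurableSet_preimage_of_rel hf s

lemma eq_of_rel_of_measurable {m : MeasurableSpace Ω} {f : Ω → ℝ} (hf : Measurable[m] f)
    {ω ω' : Ω} (h : ∀ A : Set Ω, MeasurableSet[m] A → (ω ∈ A → ω' ∈ A)) : f ω = f ω' :=
  (h (f ⁻¹' {f ω}) (hf (measurableSet_singleton _)) rfl).symm

/-- a.e. statements are pointwise when every point is charged. -/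
lemma ae_to_all {μ : Measure Ω} (hch : ∀ ω : Ω, μ {ω} ≠ 0) {p : Ω → Prop}
    (h : ∀ᵐ ω ∂μ, p ω) : ∀ ω, p ω := by
  intro ω
  by_contra hω
  refine hch ω (le_antisymm ?_ zero_le)
  calc μ {ω} ≤ μ {x | ¬ p x} := measure_mono (by simpa using hω)
  _ = 0 := h

/-- Countable-range composition measurability. -/
lemma measurable_bind' [Countable Ω] {β γ : Type*} [MeasurableSpace γ]
    {F : β → Ω → γ} {a : Ω → β}
    (hF : ∀ ω₀ : Ω, Measurable (F (a ω₀)))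
    (hA : ∀ ω₀ : Ω, MeasurableSet {ω | a ω = a ω₀}) :
    Measurable fun ω => F (a ω) ω := by
  intro s hs
  have : (fun ω => F (a ω) ω) ⁻¹' s
      = ⋃ ω₀ : Ω, ({ω | a ω = a ω₀} ∩ F (a ω₀) ⁻¹' s) := by
    ext ω
    simp only [mem_preimage, mem_iUnion, mem_inter_iff, mem_setOf_eq]
    constructor
    · intro h; exact ⟨ω, rfl, h⟩
    · rintro ⟨ω₀, he, hm⟩; rwa [he]
  rw [this]
  exact MeasurableSet.iUnion fun ω₀ => (hA ω₀).inter (hF ω₀ hs)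

/-- Pointwise bound on conditional expectations. -/
lemma abs_condexp_le {μ : Measure Ω} [IsProbabilityMeasure μ] (hch : ∀ ω : Ω, μ {ω} ≠ 0)
    (m : MeasurableSpace Ω) {f : Ω → ℝ} {M : ℝ} (hM0 : 0 ≤ M)
    (hb : ∀ ω, |f ω| ≤ M) :
    ∀ ω, |(μ[f|m]) ω| ≤ M := by
  have h := ae_bdd_condExp_of_ae_bdd (μ := μ) (m := m) (R := M.toNNReal)
    (ae_of_all μ fun ω => by simpa [Real.coe_toNNReal M hM0] using hb ω)
  have h' := @ae_to_all Ω mΩ μ hch _ h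
  intro ω
  simpa [Real.coe_toNNReal M hM0] using h' ω


lemma abs_ciSup_le {ι : Sort*} [Nonempty ι] {g : ι → ℝ} {M : ℝ} (h : ∀ i, |g i| ≤ M) :
    |⨆ i, g i| ≤ M := by
  have hb : BddAbove (Set.range g) := ⟨M, by rintro x ⟨i, rfl⟩; exact (abs_le.1 (h i)).2⟩
  refine abs_le.2 ⟨?_, ciSup_le fun i => (abs_le.1 (h i)).2⟩
  exact le_trans (abs_le.1 (h (Classical.arbitrary ι))).1 (le_ciSup hb _)

lemma abs_ciInf_le {ι : Sort*} [Nonempty ι] {g : ι → ℝ} {M : ℝ} (h : ∀ i, |g i| ≤ M) :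
    |⨅ i, g i| ≤ M := by
  have hb : BddBelow (Set.range g) := ⟨-M, by rintro x ⟨i, rfl⟩; exact (abs_le.1 (h i)).1⟩
  refine abs_le.2 ⟨le_ciInf fun i => (abs_le.1 (h i)).1, ?_⟩
  exact le_trans (ciInf_le hb _) (abs_le.1 (h (Classical.arbitrary ι))).2

lemma le_ciSup_of_abs {ι : Sort*} {g : ι → ℝ} {M : ℝ} (h : ∀ i, |g i| ≤ M) (i : ι) :
    g i ≤ ⨆ j, g j :=
  le_ciSup ⟨M, by rintro x ⟨j, rfl⟩; exact (abs_le.1 (h j)).2⟩ i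

lemma ciInf_le_of_abs {ι : Sort*} {g : ι → ℝ} {M : ℝ} (h : ∀ i, |g i| ≤ M) (i : ι) :
    (⨅ j, g j) ≤ g i :=
  ciInf_le ⟨-M, by rintro x ⟨j, rfl⟩; exact (abs_le.1 (h j)).1⟩ i

lemma measurable_Ucomp [Countable Ω] {U : ℝ≥0∞ → ℝ≥0∞ → Ω → ℝ}
    (hUm : ∀ s t : ℝ≥0∞, Measurable (U s t)) {a b : Ω → ℝ≥0∞}
    (ha : Measurable a) (hb : Measurable b) :
    Measurable fun ω => U (a ω) (b ω) ω := by
  have := measurable_bind' (F := fun p : ℝ≥0∞ × ℝ≥0∞ => U p.1 p.2)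
    (a := fun ω => (a ω, b ω)) (fun ω₀ => hUm _ _)
    (fun ω₀ => (ha.prodMk hb) (measurableSet_singleton _))
  exact this

lemma STge_const_nonempty (𝓕 : Filtration ℝ≥0∞ mΩ) (t : ℝ≥0∞) :
    Nonempty (STge 𝓕 (fun _ => t)) :=
  ⟨⟨fun _ => ∞, isStoppingTime_const 𝓕 ∞, fun _ => le_top⟩⟩

lemma st_le {𝓕 : Filtration ℝ≥0∞ mΩ} {v : Ω → ℝ≥0∞}
    (hv : IsStoppingTime 𝓕 (fun ω => (v ω : WithTop ℝ≥0∞))) (i : ℝ≥0∞) : MeasurableSet[𝓕 i] {ω | v ω ≤ i} := by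
  simpa using hv i

lemma st_of_le {𝓕 : Filtration ℝ≥0∞ mΩ} {v : Ω → ℝ≥0∞}
    (h : ∀ i : ℝ≥0∞, MeasurableSet[𝓕 i] {ω | v ω ≤ i}) : IsStoppingTime 𝓕 (fun ω => (v ω : WithTop ℝ≥0∞)) :=
  fun i => by simpa using h i

lemma stoppingTime_measurable {𝓕 : Filtration ℝ≥0∞ mΩ} {v : Ω → ℝ≥0∞}
    (hv : IsStoppingTime 𝓕 (fun ω => (v ω : WithTop ℝ≥0∞))) : Measurable v :=
  measurable_of_Iic fun i => 𝓕.le i _ (st_le hv i)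

section UBound

variable [Countable Ω] {μ : Measure Ω} [IsProbabilityMeasure μ] {𝓕 : Filtration ℝ≥0∞ mΩ}
  {U : ℝ≥0∞ → ℝ≥0∞ → Ω → ℝ} {M : ℝ}

lemma abs_X1v_le (hch : ∀ ω : Ω, μ {ω} ≠ 0) (hM0 : 0 ≤ M) (hM : ∀ s t ω, |U s t ω| ≤ M)
    (t : ℝ≥0∞) (ω : Ω) : |X1v μ 𝓕 U t ω| ≤ M := by
  have := STge_const_nonempty 𝓕 t
  exact abs_ciInf_le fun σ => abs_condexp_le hch (𝓕 t) hM0 (fun ω' => hM _ _ _) ω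

lemma abs_Y1v_le (hch : ∀ ω : Ω, μ {ω} ≠ 0) (hM0 : 0 ≤ M) (hM : ∀ s t ω, |U s t ω| ≤ M)
    (t : ℝ≥0∞) (ω : Ω) : |Y1v μ 𝓕 U t ω| ≤ M := by
  have := STge_const_nonempty 𝓕 t
  exact abs_ciSup_le fun σ => abs_condexp_le hch (𝓕 t) hM0 (fun ω' => hM _ _ _) ω

lemma measurable_X1v (t : ℝ≥0∞) : Measurable[𝓕 t] (X1v μ 𝓕 U t) := by
  apply measurable_of_rel
  intro ω ω' hrel
  exact iInf_congr fun σ =>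
    eq_of_rel_of_measurable (stronglyMeasurable_condExp.measurable) hrel

lemma measurable_Y1v (t : ℝ≥0∞) : Measurable[𝓕 t] (Y1v μ 𝓕 U t) := by
  apply measurable_of_rel
  intro ω ω' hrel
  exact iSup_congr fun σ =>
    eq_of_rel_of_measurable (stronglyMeasurable_condExp.measurable) hrel

lemma measurable_X1v_comp {v : Ω → ℝ≥0∞} (hv : Measurable v) :
    Measurable fun ω => X1v μ 𝓕 U (v ω) ω :=
  measurable_bind' (F := fun t => X1v μ 𝓕 U t) (a := v)
    (fun ω₀ => ((measurable_X1v (v ω₀)).mono (𝓕.le _) le_rfl))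
    (fun ω₀ => hv (measurableSet_singleton _))

lemma measurable_Y1v_comp {v : Ω → ℝ≥0∞} (hv : Measurable v) :
    Measurable fun ω => Y1v μ 𝓕 U (v ω) ω :=
  measurable_bind' (F := fun t => Y1v μ 𝓕 U t) (a := v)
    (fun ω₀ => ((measurable_Y1v (v ω₀)).mono (𝓕.le _) le_rfl))
    (fun ω₀ => hv (measurableSet_singleton _))

lemma integrable_of_bdd {f : Ω → ℝ} (hf : Measurable f) (hb : ∀ ω, |f ω| ≤ M) :
    Integrable f μ :=
  (integrable_const M).mono' hf.aestronglyMeasurable (ae_of_all μ fun ω => hb ω)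

end UBound
section Claims

variable [Countable Ω] {μ : Measure Ω} [IsProbabilityMeasure μ] {𝓕 : Filtration ℝ≥0∞ mΩ}
  {U : ℝ≥0∞ → ℝ≥0∞ → Ω → ℝ} {M : ℝ}

/-- The "sup side": stopping after `v` along a `𝕋`-family is dominated by `Y` on `{v < w}`. -/
lemma claim_sup (hch : ∀ ω : Ω, μ {ω} ≠ 0) (hM0 : 0 ≤ M) (hM : ∀ s t ω, |U s t ω| ≤ M)
    (hUm : ∀ s t : ℝ≥0∞, Measurable (U s t))
    {v w : Ω → ℝ≥0∞} (hv : IsStoppingTime 𝓕 (fun ω => (v ω : WithTop ℝ≥0∞))) (hw : IsStoppingTime 𝓕 (fun ω => (w ω : WithTop ℝ≥0∞)))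
    {ρ₁ : ℝ≥0∞ → Ω → ℝ≥0∞} (hρ₁m : ∀ t, Measurable (ρ₁ t))
    (hρ₁gt : ∀ t : ℝ≥0∞, t ≠ ∞ → ρ₁ t ∈ STgt 𝓕 t) :
    ∫ ω in {ω | v ω < w ω}, U (ρ₁ (v ω) ω) (v ω) ω ∂μ ≤
      ∫ ω in {ω | v ω < w ω}, Y1v μ 𝓕 U (v ω) ω ∂μ := by
  classical
  have hvm : Measurable v := stoppingTime_measurable hv
  have hwm : Measurable w := stoppingTime_measurable hw
  set S : Set Ω := {ω | v ω < w ω} with hS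
  set B : Set.range v → Set Ω := fun t => {ω | v ω = t.1 ∧ t.1 < w ω} with hBdef
  have : Countable (Set.range v) := (Set.countable_range v).to_subtype
  have hBmeas : ∀ t, MeasurableSet (B t) := by
    intro t
    have : B t = v ⁻¹' {t.1} ∩ {ω | t.1 < w ω} := rfl
    rw [this]
    exact (hvm (measurableSet_singleton _)).inter (measurableSet_lt measurable_const hwm)
  have hBdisj : Pairwise (Function.onFun Disjoint B) := by
    intro t₁ t₂ hne
    rw [Function.onFun, Set.disjoint_left]
    rintro ω ⟨h1, _⟩ ⟨h2, _⟩
    exact hne (Subtype.ext (h1 ▸ h2))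
  have hBunion : (⋃ t, B t) = S := by
    ext ω
    simp only [Set.mem_iUnion, hBdef, Set.mem_setOf_eq]
    constructor
    · rintro ⟨t, h1, h2⟩; rw [hS]; simp only [Set.mem_setOf_eq]; rw [h1]; exact h2
    · intro h; exact ⟨⟨v ω, Set.mem_range_self ω⟩, rfl, h⟩
  have hgmeas : Measurable fun ω => U (ρ₁ (v ω) ω) (v ω) ω := by
    apply measurable_bind' (F := fun t ω => U (ρ₁ t ω) t ω) (a := v)
    · intro ω₀
      exact measurable_Ucomp hUm (hρ₁m _) measurable_const
    · intro ω₀; exact hvm (measurableSet_singleton _)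
  have hgint : Integrable (fun ω => U (ρ₁ (v ω) ω) (v ω) ω) μ :=
    integrable_of_bdd (M := M) hgmeas fun ω => hM _ _ _
  have hYmeas : Measurable fun ω => Y1v μ 𝓕 U (v ω) ω := measurable_Y1v_comp hvm
  have hYint : Integrable (fun ω => Y1v μ 𝓕 U (v ω) ω) μ :=
    integrable_of_bdd (M := M) hYmeas fun ω => abs_Y1v_le hch hM0 hM _ ω
  have hs1 : HasSum (fun t => ∫ ω in B t, U (ρ₁ (v ω) ω) (v ω) ω ∂μ)
      (∫ ω in S, U (ρ₁ (v ω) ω) (v ω) ω ∂μ) := by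
    rw [← hBunion]
    exact hasSum_integral_iUnion hBmeas hBdisj (hgint.integrableOn)
  have hs2 : HasSum (fun t => ∫ ω in B t, Y1v μ 𝓕 U (v ω) ω ∂μ)
      (∫ ω in S, Y1v μ 𝓕 U (v ω) ω ∂μ) := by
    rw [← hBunion]
    exact hasSum_integral_iUnion hBmeas hBdisj (hYint.integrableOn)
  refine hasSum_le ?_ hs1 hs2
  intro t
  rcases eq_or_ne t.1 ∞ with htop | htop
  · have : B t = ∅ := by
      ext ω; simp only [hBdef, Set.mem_setOf_eq, Set.mem_empty_iff_false, iff_false, not_and]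
      intro _; rw [htop]; exact not_top_lt
    simp [this]
  -- main case : t.1 ≠ ∞
  obtain ⟨hρ₁st, hρ₁lt⟩ := hρ₁gt t.1 htop
  have hBt : MeasurableSet[𝓕 t.1] (B t) := by
    have : B t = {ω | v ω = t.1} ∩ {ω | w ω ≤ t.1}ᶜ := by
      ext ω
      simp only [hBdef, Set.mem_setOf_eq, Set.mem_inter_iff, Set.mem_compl_iff, not_le]
    rw [this]
    exact (by simpa using hv.measurableSet_eq t.1 : MeasurableSet[𝓕 t.1] {ω | v ω = t.1}).inter (st_le hw t.1).compl
  set σ' : Ω → ℝ≥0∞ := fun ω => if ω ∈ B t then ρ₁ t.1 ω else ∞ with hσ'def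
  have hσ'st : IsStoppingTime 𝓕 (fun ω => (σ' ω : WithTop ℝ≥0∞)) := by
    refine st_of_le ?_
    intro s
    by_cases hstop : s = ∞
    · have : {ω | σ' ω ≤ s} = Set.univ := by
        ext ω; simp [hstop]
      rw [this]; exact MeasurableSet.univ
    by_cases hts : t.1 ≤ s
    · have : {ω | σ' ω ≤ s} = B t ∩ {ω | ρ₁ t.1 ω ≤ s} := by
        ext ω
        simp only [Set.mem_setOf_eq, Set.mem_inter_iff, hσ'def]
        by_cases hωB : ω ∈ B t <;> simp [hωB, hstop, top_le_iff]
      rw [this]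
      exact @MeasurableSet.inter Ω (𝓕 s) _ _ (𝓕.mono hts _ hBt) (st_le hρ₁st s)
    · have : {ω | σ' ω ≤ s} = ∅ := by
        ext ω
        simp only [Set.mem_setOf_eq, Set.mem_empty_iff_false, iff_false, hσ'def]
        by_cases hωB : ω ∈ B t
        · simp only [hωB, if_true]
          intro hle
          exact hts (le_trans (le_of_lt (hρ₁lt ω)) hle)
        · simp [hωB, hstop, top_le_iff]
      rw [this]; exact @MeasurableSet.empty Ω (𝓕 s)
  have hσ'ge : ∀ ω, t.1 ≤ σ' ω := by
    intro ω
    rw [hσ'def]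
    by_cases hωB : ω ∈ B t
    · simp only [hωB, if_true]; exact le_of_lt (hρ₁lt ω)
    · simp [hωB]
  have hσ'mem : σ' ∈ STge 𝓕 (fun _ => t.1) := ⟨hσ'st, hσ'ge⟩
  have hσ'm : Measurable σ' := Measurable.ite (hBmeas t) (hρ₁m t.1) measurable_const
  have hf'm : Measurable fun ω => U (σ' ω) t.1 ω :=
    measurable_Ucomp hUm hσ'm measurable_const
  have hf'int : Integrable (fun ω => U (σ' ω) t.1 ω) μ :=
    integrable_of_bdd (M := M) hf'm fun ω => hM _ _ _
  have key1 : ∀ ω, (μ[fun ω' => U (σ' ω') t.1 ω' | 𝓕 t.1]) ω ≤ Y1v μ 𝓕 U t.1 ω := by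
    intro ω
    exact le_ciSup_of_abs (M := M)
      (g := fun σ : STge 𝓕 (fun _ => t.1) => (μ[fun ω' => U (σ.1 ω') t.1 ω' | 𝓕 t.1]) ω)
      (fun σ => abs_condexp_le hch (𝓕 t.1) hM0 (fun ω' => hM _ _ _) ω)
      (⟨σ', hσ'mem⟩ : STge 𝓕 (fun _ => t.1))
  calc ∫ ω in B t, U (ρ₁ (v ω) ω) (v ω) ω ∂μ
      = ∫ ω in B t, U (σ' ω) t.1 ω ∂μ := by
        refine setIntegral_congr_fun (hBmeas t) fun ω hω => ?_
        have h1 : v ω = t.1 := hω.1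
        have h2 : σ' ω = ρ₁ t.1 ω := if_pos hω
        rw [h1, h2]
    _ = ∫ ω in B t, (μ[fun ω' => U (σ' ω') t.1 ω' | 𝓕 t.1]) ω ∂μ :=
        (setIntegral_condExp (𝓕.le t.1) hf'int hBt).symm
    _ ≤ ∫ ω in B t, Y1v μ 𝓕 U t.1 ω ∂μ := by
        refine setIntegral_mono_on (integrable_condExp.integrableOn)
          ((integrable_of_bdd (M := M) ((measurable_Y1v t.1).mono (𝓕.le _) le_rfl)
            (fun ω => abs_Y1v_le hch hM0 hM _ ω)).integrableOn) (hBmeas t)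
          fun ω _ => key1 ω
    _ = ∫ ω in B t, Y1v μ 𝓕 U (v ω) ω ∂μ := by
        refine setIntegral_congr_fun (hBmeas t) fun ω hω => ?_
        rw [hω.1]

/-- The "inf side": `X` is dominated by stopping along a `𝕋`-family on `{v < w}`. -/
lemma claim_inf (hch : ∀ ω : Ω, μ {ω} ≠ 0) (hM0 : 0 ≤ M) (hM : ∀ s t ω, |U s t ω| ≤ M)
    (hUm : ∀ s t : ℝ≥0∞, Measurable (U s t))
    {v w : Ω → ℝ≥0∞} (hv : IsStoppingTime 𝓕 (fun ω => (v ω : WithTop ℝ≥0∞))) (hw : IsStoppingTime 𝓕 (fun ω => (w ω : WithTop ℝ≥0∞)))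
    {ρ₁ : ℝ≥0∞ → Ω → ℝ≥0∞} (hρ₁m : ∀ t, Measurable (ρ₁ t))
    (hρ₁gt : ∀ t : ℝ≥0∞, t ≠ ∞ → ρ₁ t ∈ STgt 𝓕 t) :
    ∫ ω in {ω | v ω < w ω}, X1v μ 𝓕 U (v ω) ω ∂μ ≤
      ∫ ω in {ω | v ω < w ω}, U (v ω) (ρ₁ (v ω) ω) ω ∂μ := by
  classical
  have hvm : Measurable v := stoppingTime_measurable hv
  have hwm : Measurable w := stoppingTime_measurable hw
  set S : Set Ω := {ω | v ω < w ω} with hS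
  set B : Set.range v → Set Ω := fun t => {ω | v ω = t.1 ∧ t.1 < w ω} with hBdef
  have : Countable (Set.range v) := (Set.countable_range v).to_subtype
  have hBmeas : ∀ t, MeasurableSet (B t) := by
    intro t
    have : B t = v ⁻¹' {t.1} ∩ {ω | t.1 < w ω} := rfl
    rw [this]
    exact (hvm (measurableSet_singleton _)).inter (measurableSet_lt measurable_const hwm)
  have hBdisj : Pairwise (Function.onFun Disjoint B) := by
    intro t₁ t₂ hne
    rw [Function.onFun, Set.disjoint_left]
    rintro ω ⟨h1, _⟩ ⟨h2, _⟩
    exact hne (Subtype.ext (h1 ▸ h2))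
  have hBunion : (⋃ t, B t) = S := by
    ext ω
    simp only [Set.mem_iUnion, hBdef, Set.mem_setOf_eq]
    constructor
    · rintro ⟨t, h1, h2⟩; rw [hS]; simp only [Set.mem_setOf_eq]; rw [h1]; exact h2
    · intro h; exact ⟨⟨v ω, Set.mem_range_self ω⟩, rfl, h⟩
  have hgmeas : Measurable fun ω => U (v ω) (ρ₁ (v ω) ω) ω := by
    apply measurable_bind' (F := fun t ω => U t (ρ₁ t ω) ω) (a := v)
    · intro ω₀
      exact measurable_Ucomp hUm measurable_const (hρ₁m _)
    · intro ω₀; exact hvm (measurableSet_singleton _)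
  have hgint : Integrable (fun ω => U (v ω) (ρ₁ (v ω) ω) ω) μ :=
    integrable_of_bdd (M := M) hgmeas fun ω => hM _ _ _
  have hYmeas : Measurable fun ω => X1v μ 𝓕 U (v ω) ω := measurable_X1v_comp hvm
  have hYint : Integrable (fun ω => X1v μ 𝓕 U (v ω) ω) μ :=
    integrable_of_bdd (M := M) hYmeas fun ω => abs_X1v_le hch hM0 hM _ ω
  have hs1 : HasSum (fun t => ∫ ω in B t, U (v ω) (ρ₁ (v ω) ω) ω ∂μ)
      (∫ ω in S, U (v ω) (ρ₁ (v ω) ω) ω ∂μ) := by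
    rw [← hBunion]
    exact hasSum_integral_iUnion hBmeas hBdisj (hgint.integrableOn)
  have hs2 : HasSum (fun t => ∫ ω in B t, X1v μ 𝓕 U (v ω) ω ∂μ)
      (∫ ω in S, X1v μ 𝓕 U (v ω) ω ∂μ) := by
    rw [← hBunion]
    exact hasSum_integral_iUnion hBmeas hBdisj (hYint.integrableOn)
  refine hasSum_le ?_ hs2 hs1
  intro t
  rcases eq_or_ne t.1 ∞ with htop | htop
  · have : B t = ∅ := by
      ext ω; simp only [hBdef, Set.mem_setOf_eq, Set.mem_empty_iff_false, iff_false, not_and]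
      intro _; rw [htop]; exact not_top_lt
    simp [this]
  -- main case : t.1 ≠ ∞
  obtain ⟨hρ₁st, hρ₁lt⟩ := hρ₁gt t.1 htop
  have hBt : MeasurableSet[𝓕 t.1] (B t) := by
    have : B t = {ω | v ω = t.1} ∩ {ω | w ω ≤ t.1}ᶜ := by
      ext ω
      simp only [hBdef, Set.mem_setOf_eq, Set.mem_inter_iff, Set.mem_compl_iff, not_le]
    rw [this]
    exact (by simpa using hv.measurableSet_eq t.1 : MeasurableSet[𝓕 t.1] {ω | v ω = t.1}).inter (st_le hw t.1).compl
  set σ' : Ω → ℝ≥0∞ := fun ω => if ω ∈ B t then ρ₁ t.1 ω else ∞ with hσ'def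
  have hσ'st : IsStoppingTime 𝓕 (fun ω => (σ' ω : WithTop ℝ≥0∞)) := by
    refine st_of_le ?_
    intro s
    by_cases hstop : s = ∞
    · have : {ω | σ' ω ≤ s} = Set.univ := by
        ext ω; simp [hstop]
      rw [this]; exact MeasurableSet.univ
    by_cases hts : t.1 ≤ s
    · have : {ω | σ' ω ≤ s} = B t ∩ {ω | ρ₁ t.1 ω ≤ s} := by
        ext ω
        simp only [Set.mem_setOf_eq, Set.mem_inter_iff, hσ'def]
        by_cases hωB : ω ∈ B t <;> simp [hωB, hstop, top_le_iff]
      rw [this]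
      exact @MeasurableSet.inter Ω (𝓕 s) _ _ (𝓕.mono hts _ hBt) (st_le hρ₁st s)
    · have : {ω | σ' ω ≤ s} = ∅ := by
        ext ω
        simp only [Set.mem_setOf_eq, Set.mem_empty_iff_false, iff_false, hσ'def]
        by_cases hωB : ω ∈ B t
        · simp only [hωB, if_true]
          intro hle
          exact hts (le_trans (le_of_lt (hρ₁lt ω)) hle)
        · simp [hωB, hstop, top_le_iff]
      rw [this]; exact @MeasurableSet.empty Ω (𝓕 s)
  have hσ'ge : ∀ ω, t.1 ≤ σ' ω := by
    intro ω
    rw [hσ'def]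
    by_cases hωB : ω ∈ B t
    · simp only [hωB, if_true]; exact le_of_lt (hρ₁lt ω)
    · simp [hωB]
  have hσ'mem : σ' ∈ STge 𝓕 (fun _ => t.1) := ⟨hσ'st, hσ'ge⟩
  have hσ'm : Measurable σ' := Measurable.ite (hBmeas t) (hρ₁m t.1) measurable_const
  have hf'm : Measurable fun ω => U t.1 (σ' ω) ω :=
    measurable_Ucomp hUm measurable_const hσ'm
  have hf'int : Integrable (fun ω => U t.1 (σ' ω) ω) μ :=
    integrable_of_bdd (M := M) hf'm fun ω => hM _ _ _
  have key1 : ∀ ω, X1v μ 𝓕 U t.1 ω ≤ (μ[fun ω' => U t.1 (σ' ω') ω' | 𝓕 t.1]) ω := by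
    intro ω
    exact ciInf_le_of_abs (M := M)
      (g := fun σ : STge 𝓕 (fun _ => t.1) => (μ[fun ω' => U t.1 (σ.1 ω') ω' | 𝓕 t.1]) ω)
      (fun σ => abs_condexp_le hch (𝓕 t.1) hM0 (fun ω' => hM _ _ _) ω)
      (⟨σ', hσ'mem⟩ : STge 𝓕 (fun _ => t.1))
  calc ∫ ω in B t, X1v μ 𝓕 U (v ω) ω ∂μ
      = ∫ ω in B t, X1v μ 𝓕 U t.1 ω ∂μ := by
        refine setIntegral_congr_fun (hBmeas t) fun ω hω => ?_
        rw [hω.1]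
    _ ≤ ∫ ω in B t, (μ[fun ω' => U t.1 (σ' ω') ω' | 𝓕 t.1]) ω ∂μ := by
        refine setIntegral_mono_on
          ((integrable_of_bdd (M := M) ((measurable_X1v t.1).mono (𝓕.le _) le_rfl)
            (fun ω => abs_X1v_le hch hM0 hM _ ω)).integrableOn)
          (integrable_condExp.integrableOn) (hBmeas t)
          fun ω _ => key1 ω
    _ = ∫ ω in B t, U t.1 (σ' ω) ω ∂μ :=
        setIntegral_condExp (𝓕.le t.1) hf'int hBt
    _ = ∫ ω in B t, U (v ω) (ρ₁ (v ω) ω) ω ∂μ := by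
        refine setIntegral_congr_fun (hBmeas t) fun ω hω => ?_
        have h1 : v ω = t.1 := hω.1
        have h2 : σ' ω = ρ₁ t.1 ω := if_pos hω
        rw [h1, h2]

lemma integral_triple_split {S₁ S₂ : Set Ω} (hS₁ : MeasurableSet S₁) (hS₂ : MeasurableSet S₂)
    (hd : Disjoint S₁ S₂) {f : Ω → ℝ} (hf : Integrable f μ) :
    ∫ ω, f ω ∂μ = ∫ ω in S₁, f ω ∂μ + ∫ ω in S₂, f ω ∂μ + ∫ ω in (S₁ ∪ S₂)ᶜ, f ω ∂μ := by
  rw [← integral_add_compl (hS₁.union hS₂) hf,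
    setIntegral_union hd hS₂ hf.integrableOn hf.integrableOn]

lemma lemA (hch : ∀ ω : Ω, μ {ω} ≠ 0) (hM0 : 0 ≤ M) (hM : ∀ s t ω, |U s t ω| ≤ M)
    (hUm : ∀ s t : ℝ≥0∞, Measurable (U s t))
    {ρ₀ τ₀ε : Ω → ℝ≥0∞} {ρ₁ ψ : ℝ≥0∞ → Ω → ℝ≥0∞}
    (hρ₀ : IsStoppingTime 𝓕 (fun ω => (ρ₀ ω : WithTop ℝ≥0∞))) (hτ₀ε : IsStoppingTime 𝓕 (fun ω => (τ₀ε ω : WithTop ℝ≥0∞)))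
    (hρ₁m : ∀ t, Measurable (ρ₁ t)) (hρ₁gt : ∀ t : ℝ≥0∞, t ≠ ∞ → ρ₁ t ∈ STgt 𝓕 t)
    (hψm : ∀ t, Measurable (ψ t)) {ε : ℝ} (hε : 0 ≤ ε)
    (hap : ∀ ω, (μ[fun ω' => U (ρ₀ ω') (ψ (ρ₀ ω') ω') ω' | hρ₀.measurableSpace]) ω - 2*ε
      < X1v μ 𝓕 U (ρ₀ ω) ω) :
    payoff μ U (ρ₀, ρ₁) (τ₀ε, ψ) ≤
      dynkinV μ (X1v μ 𝓕 U) (Y1v μ 𝓕 U) (Zv U) ρ₀ τ₀ε + 2*ε := by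
  classical
  have hρ₀m : Measurable ρ₀ := stoppingTime_measurable hρ₀
  have hτ₀εm : Measurable τ₀ε := stoppingTime_measurable hτ₀ε
  set g : Ω → ℝ :=
    fun ω => U (play (ρ₀, ρ₁) (τ₀ε, ψ) ω) (play (τ₀ε, ψ) (ρ₀, ρ₁) ω) ω with hgdef
  set k : Ω → ℝ := dynkinKernel (X1v μ 𝓕 U) (Y1v μ 𝓕 U) (Zv U) ρ₀ τ₀ε with hkdef
  set f₁ : Ω → ℝ := fun ω => U (ρ₀ ω) (ψ (ρ₀ ω) ω) ω with hf₁def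
  have hplay1 : Measurable (play (ρ₀, ρ₁) (τ₀ε, ψ)) := by
    refine Measurable.ite (measurableSet_le hρ₀m hτ₀εm) hρ₀m ?_
    exact measurable_bind' (F := ρ₁) (a := τ₀ε) (fun ω₀ => hρ₁m _)
      (fun ω₀ => hτ₀εm (measurableSet_singleton _))
  have hplay2 : Measurable (play (τ₀ε, ψ) (ρ₀, ρ₁)) := by
    refine Measurable.ite (measurableSet_le hτ₀εm hρ₀m) hτ₀εm ?_
    exact measurable_bind' (F := ψ) (a := ρ₀) (fun ω₀ => hψm _)
      (fun ω₀ => hρ₀m (measurableSet_singleton _))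
  have hgm : Measurable g := measurable_Ucomp hUm hplay1 hplay2
  have hgint : Integrable g μ := integrable_of_bdd (M := M) hgm fun ω => hM _ _ _
  have hkm : Measurable k := by
    refine Measurable.ite (measurableSet_lt hρ₀m hτ₀εm) (measurable_X1v_comp hρ₀m) ?_
    refine Measurable.ite (measurableSet_lt hτ₀εm hρ₀m) (measurable_Y1v_comp hτ₀εm) ?_
    exact measurable_Ucomp hUm hρ₀m hρ₀m
  have hkb : ∀ ω, |k ω| ≤ M := by
    intro ω
    rw [hkdef, dynkinKernel]
    split_ifs with h1 h2
    · exact abs_X1v_le hch hM0 hM _ ω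
    · exact abs_Y1v_le hch hM0 hM _ ω
    · exact hM _ _ _
  have hkint : Integrable k μ := integrable_of_bdd (M := M) hkm hkb
  have hf₁m : Measurable f₁ := measurable_Ucomp hUm hρ₀m
    (measurable_bind' (F := ψ) (a := ρ₀) (fun ω₀ => hψm _)
      (fun ω₀ => hρ₀m (measurableSet_singleton _)))
  have hf₁int : Integrable f₁ μ := integrable_of_bdd (M := M) hf₁m fun ω => hM _ _ _
  set S₁ : Set Ω := {ω | ρ₀ ω < τ₀ε ω} with hS₁def
  set S₂ : Set Ω := {ω | τ₀ε ω < ρ₀ ω} with hS₂def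
  have hS₁ : MeasurableSet S₁ := measurableSet_lt hρ₀m hτ₀εm
  have hS₂ : MeasurableSet S₂ := measurableSet_lt hτ₀εm hρ₀m
  have hd : Disjoint S₁ S₂ := by
    rw [Set.disjoint_left]
    intro ω h1 h2
    have a1 : ρ₀ ω < τ₀ε ω := h1
    have a2 : τ₀ε ω < ρ₀ ω := h2
    exact lt_asymm a1 a2
  have hb1 : ∫ ω in S₁, g ω ∂μ ≤ ∫ ω in S₁, k ω ∂μ + 2*ε := by
    have hS₁m' : MeasurableSet[hρ₀.measurableSpace] S₁ := by
      have h0 := (hτ₀ε.measurableSet_stopping_time_le hρ₀).compl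
      simp only [WithTop.coe_le_coe] at h0
      have : S₁ = {ω | τ₀ε ω ≤ ρ₀ ω}ᶜ := by
        ext ω; simp only [hS₁def, Set.mem_setOf_eq, Set.mem_compl_iff, not_le]
      rwa [this]
    have e1 : ∫ ω in S₁, g ω ∂μ = ∫ ω in S₁, f₁ ω ∂μ := by
      refine setIntegral_congr_fun hS₁ fun ω hω => ?_
      have hlt : ρ₀ ω < τ₀ε ω := hω
      have e1 : play (ρ₀, ρ₁) (τ₀ε, ψ) ω = ρ₀ ω := if_pos (le_of_lt hlt)
      have e2 : play (τ₀ε, ψ) (ρ₀, ρ₁) ω = ψ (ρ₀ ω) ω := if_neg (not_le.2 hlt)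
      rw [hgdef]
      simp only [e1, e2, hf₁def]
    have e2 : ∫ ω in S₁, f₁ ω ∂μ
        = ∫ ω in S₁, (μ[f₁ | hρ₀.measurableSpace]) ω ∂μ :=
      (setIntegral_condExp hρ₀.measurableSpace_le hf₁int hS₁m').symm
    have e3 : ∫ ω in S₁, (μ[f₁ | hρ₀.measurableSpace]) ω ∂μ
        ≤ ∫ ω in S₁, (X1v μ 𝓕 U (ρ₀ ω) ω + 2*ε) ∂μ := by
      refine setIntegral_mono_on (integrable_condExp.integrableOn) ?_ hS₁ ?_
      · exact ((integrable_of_bdd (M := M + 2*ε)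
          ((measurable_X1v_comp hρ₀m).add measurable_const)
          (fun ω => by
            have := abs_X1v_le (𝓕 := 𝓕) hch hM0 hM (ρ₀ ω) ω
            have h2 : (0:ℝ) ≤ 2*ε := by linarith
            calc |X1v μ 𝓕 U (ρ₀ ω) ω + 2*ε| ≤ |X1v μ 𝓕 U (ρ₀ ω) ω| + |2*ε| := abs_add_le _ _
            _ ≤ M + 2*ε := by rw [abs_of_nonneg h2]; linarith)).integrableOn)
      · intro ω _
        have := hap ω
        linarith
    have e4 : ∫ ω in S₁, (X1v μ 𝓕 U (ρ₀ ω) ω + 2*ε) ∂μ ≤ ∫ ω in S₁, k ω ∂μ + 2*ε := by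
      have hXint : Integrable (fun ω => X1v μ 𝓕 U (ρ₀ ω) ω) μ :=
        integrable_of_bdd (M := M) (measurable_X1v_comp hρ₀m)
          (fun ω => abs_X1v_le hch hM0 hM _ ω)
      rw [integral_add hXint.integrableOn (integrableOn_const (measure_ne_top μ _))]
      have hμ1 : (μ S₁).toReal ≤ 1 := by
        have := prob_le_one (μ := μ) (s := S₁)
        calc (μ S₁).toReal ≤ (1 : ℝ≥0∞).toReal := ENNReal.toReal_mono ENNReal.one_ne_top this
        _ = 1 := by simp
      have hconst : ∫ _ω in S₁, (2*ε) ∂μ = (μ S₁).toReal * (2*ε) := by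
        rw [setIntegral_const, smul_eq_mul]; rfl
      have hXk : ∫ ω in S₁, X1v μ 𝓕 U (ρ₀ ω) ω ∂μ = ∫ ω in S₁, k ω ∂μ := by
        refine setIntegral_congr_fun hS₁ fun ω hω => ?_
        have hlt : ρ₀ ω < τ₀ε ω := hω
        simp only [hkdef, dynkinKernel, if_pos hlt]
      rw [hconst, hXk]
      have : (μ S₁).toReal * (2*ε) ≤ 2*ε := by
        calc (μ S₁).toReal * (2*ε) ≤ 1 * (2*ε) :=
          mul_le_mul_of_nonneg_right hμ1 (by linarith)
        _ = 2*ε := one_mul _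
      linarith
    linarith [e3, e4, e1 ▸ e2]
  have hb2 : ∫ ω in S₂, g ω ∂μ ≤ ∫ ω in S₂, k ω ∂μ := by
    have e1 : ∫ ω in S₂, g ω ∂μ = ∫ ω in S₂, U (ρ₁ (τ₀ε ω) ω) (τ₀ε ω) ω ∂μ := by
      refine setIntegral_congr_fun hS₂ fun ω hω => ?_
      have hlt : τ₀ε ω < ρ₀ ω := hω
      have e1 : play (ρ₀, ρ₁) (τ₀ε, ψ) ω = ρ₁ (τ₀ε ω) ω := if_neg (not_le.2 hlt)
      have e2 : play (τ₀ε, ψ) (ρ₀, ρ₁) ω = τ₀ε ω := if_pos (le_of_lt hlt)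
      rw [hgdef]
      simp only [e1, e2]
    have e2 := claim_sup (M := M) hch hM0 hM hUm hτ₀ε hρ₀ hρ₁m hρ₁gt
    have e3 : ∫ ω in S₂, Y1v μ 𝓕 U (τ₀ε ω) ω ∂μ = ∫ ω in S₂, k ω ∂μ := by
      refine setIntegral_congr_fun hS₂ fun ω hω => ?_
      have hlt : τ₀ε ω < ρ₀ ω := hω
      simp only [hkdef, dynkinKernel, if_neg (lt_asymm hlt), if_pos hlt]
    rw [e1, ← e3]
    exact e2
  have hb3 : ∫ ω in (S₁ ∪ S₂)ᶜ, g ω ∂μ = ∫ ω in (S₁ ∪ S₂)ᶜ, k ω ∂μ := by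
    refine setIntegral_congr_fun (hS₁.union hS₂).compl fun ω hω => ?_
    rw [Set.mem_compl_iff, Set.mem_union] at hω
    push_neg at hω
    have heq : ρ₀ ω = τ₀ε ω := le_antisymm (not_lt.1 hω.2) (not_lt.1 hω.1)
    have e1 : play (ρ₀, ρ₁) (τ₀ε, ψ) ω = ρ₀ ω := if_pos (le_of_eq heq)
    have e2 : play (τ₀ε, ψ) (ρ₀, ρ₁) ω = τ₀ε ω := if_pos (le_of_eq heq.symm)
    have hn1 : ¬ ρ₀ ω < τ₀ε ω := by rw [heq]; exact lt_irrefl _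
    have hn2 : ¬ τ₀ε ω < ρ₀ ω := by rw [heq]; exact lt_irrefl _
    rw [hgdef, hkdef]
    simp only [e1, e2, dynkinKernel, Zv, if_neg hn1, if_neg hn2]
    rw [← heq]
  have hsplit1 := integral_triple_split hS₁ hS₂ hd hgint
  have hsplit2 := integral_triple_split hS₁ hS₂ hd hkint
  have : payoff μ U (ρ₀, ρ₁) (τ₀ε, ψ) = ∫ ω, g ω ∂μ := rfl
  rw [this]
  have : dynkinV μ (X1v μ 𝓕 U) (Y1v μ 𝓕 U) (Zv U) ρ₀ τ₀ε = ∫ ω, k ω ∂μ := rfl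
  rw [this, hsplit1, hsplit2]
  linarith [hb1, hb2, hb3]

lemma lemA' (hch : ∀ ω : Ω, μ {ω} ≠ 0) (hM0 : 0 ≤ M) (hM : ∀ s t ω, |U s t ω| ≤ M)
    (hUm : ∀ s t : ℝ≥0∞, Measurable (U s t))
    {ρ₀ε τ₀ : Ω → ℝ≥0∞} {φ τ₁ : ℝ≥0∞ → Ω → ℝ≥0∞}
    (hρ₀ε : IsStoppingTime 𝓕 (fun ω => (ρ₀ε ω : WithTop ℝ≥0∞))) (hτ₀ : IsStoppingTime 𝓕 (fun ω => (τ₀ ω : WithTop ℝ≥0∞)))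
    (hτ₁m : ∀ t, Measurable (τ₁ t)) (hτ₁gt : ∀ t : ℝ≥0∞, t ≠ ∞ → τ₁ t ∈ STgt 𝓕 t)
    (hφm : ∀ t, Measurable (φ t)) {ε : ℝ} (hε : 0 ≤ ε)
    (hap : ∀ ω, Y1v μ 𝓕 U (τ₀ ω) ω <
      (μ[fun ω' => U (φ (τ₀ ω') ω') (τ₀ ω') ω' | hτ₀.measurableSpace]) ω + 2*ε) :
    dynkinV μ (X1v μ 𝓕 U) (Y1v μ 𝓕 U) (Zv U) ρ₀ε τ₀ ≤
      payoff μ U (ρ₀ε, φ) (τ₀, τ₁) + 2*ε := by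
  classical
  have hρ₀m : Measurable ρ₀ε := stoppingTime_measurable hρ₀ε
  have hτ₀m : Measurable τ₀ := stoppingTime_measurable hτ₀
  set g : Ω → ℝ :=
    fun ω => U (play (ρ₀ε, φ) (τ₀, τ₁) ω) (play (τ₀, τ₁) (ρ₀ε, φ) ω) ω with hgdef
  set k : Ω → ℝ := dynkinKernel (X1v μ 𝓕 U) (Y1v μ 𝓕 U) (Zv U) ρ₀ε τ₀ with hkdef
  set f₂ : Ω → ℝ := fun ω => U (φ (τ₀ ω) ω) (τ₀ ω) ω with hf₂def
  have hplay1 : Measurable (play (ρ₀ε, φ) (τ₀, τ₁)) := by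
    refine Measurable.ite (measurableSet_le hρ₀m hτ₀m) hρ₀m ?_
    exact measurable_bind' (F := φ) (a := τ₀) (fun ω₀ => hφm _)
      (fun ω₀ => hτ₀m (measurableSet_singleton _))
  have hplay2 : Measurable (play (τ₀, τ₁) (ρ₀ε, φ)) := by
    refine Measurable.ite (measurableSet_le hτ₀m hρ₀m) hτ₀m ?_
    exact measurable_bind' (F := τ₁) (a := ρ₀ε) (fun ω₀ => hτ₁m _)
      (fun ω₀ => hρ₀m (measurableSet_singleton _))
  have hgm : Measurable g := measurable_Ucomp hUm hplay1 hplay2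
  have hgint : Integrable g μ := integrable_of_bdd (M := M) hgm fun ω => hM _ _ _
  have hkm : Measurable k := by
    refine Measurable.ite (measurableSet_lt hρ₀m hτ₀m) (measurable_X1v_comp hρ₀m) ?_
    refine Measurable.ite (measurableSet_lt hτ₀m hρ₀m) (measurable_Y1v_comp hτ₀m) ?_
    exact measurable_Ucomp hUm hρ₀m hρ₀m
  have hkb : ∀ ω, |k ω| ≤ M := by
    intro ω
    rw [hkdef, dynkinKernel]
    split_ifs with h1 h2
    · exact abs_X1v_le hch hM0 hM _ ω
    · exact abs_Y1v_le hch hM0 hM _ ω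
    · exact hM _ _ _
  have hkint : Integrable k μ := integrable_of_bdd (M := M) hkm hkb
  have hf₂m : Measurable f₂ := measurable_Ucomp hUm
    (measurable_bind' (F := φ) (a := τ₀) (fun ω₀ => hφm _)
      (fun ω₀ => hτ₀m (measurableSet_singleton _))) hτ₀m
  have hf₂int : Integrable f₂ μ := integrable_of_bdd (M := M) hf₂m fun ω => hM _ _ _
  set S₁ : Set Ω := {ω | ρ₀ε ω < τ₀ ω} with hS₁def
  set S₂ : Set Ω := {ω | τ₀ ω < ρ₀ε ω} with hS₂def
  have hS₁ : MeasurableSet S₁ := measurableSet_lt hρ₀m hτ₀m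
  have hS₂ : MeasurableSet S₂ := measurableSet_lt hτ₀m hρ₀m
  have hd : Disjoint S₁ S₂ := by
    rw [Set.disjoint_left]
    intro ω h1 h2
    have a1 : ρ₀ε ω < τ₀ ω := h1
    have a2 : τ₀ ω < ρ₀ε ω := h2
    exact lt_asymm a1 a2
  have hb1 : ∫ ω in S₁, k ω ∂μ ≤ ∫ ω in S₁, g ω ∂μ := by
    have e1 : ∫ ω in S₁, k ω ∂μ = ∫ ω in S₁, X1v μ 𝓕 U (ρ₀ε ω) ω ∂μ := by
      refine setIntegral_congr_fun hS₁ fun ω hω => ?_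
      have hlt : ρ₀ε ω < τ₀ ω := hω
      simp only [hkdef, dynkinKernel, if_pos hlt]
    have e2 := claim_inf (M := M) hch hM0 hM hUm hρ₀ε hτ₀ hτ₁m hτ₁gt
    have e3 : ∫ ω in S₁, U (ρ₀ε ω) (τ₁ (ρ₀ε ω) ω) ω ∂μ = ∫ ω in S₁, g ω ∂μ := by
      refine setIntegral_congr_fun hS₁ fun ω hω => ?_
      have hlt : ρ₀ε ω < τ₀ ω := hω
      have p1 : play (ρ₀ε, φ) (τ₀, τ₁) ω = ρ₀ε ω := if_pos (le_of_lt hlt)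
      have p2 : play (τ₀, τ₁) (ρ₀ε, φ) ω = τ₁ (ρ₀ε ω) ω := if_neg (not_le.2 hlt)
      rw [hgdef]
      simp only [p1, p2]
    rw [e1, ← e3]
    exact e2
  have hb2 : ∫ ω in S₂, k ω ∂μ ≤ ∫ ω in S₂, g ω ∂μ + 2*ε := by
    have hS₂m' : MeasurableSet[hτ₀.measurableSpace] S₂ := by
      have h0 := (hρ₀ε.measurableSet_stopping_time_le hτ₀).compl
      simp only [WithTop.coe_le_coe] at h0
      have : S₂ = {ω | ρ₀ε ω ≤ τ₀ ω}ᶜ := by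
        ext ω; simp only [hS₂def, Set.mem_setOf_eq, Set.mem_compl_iff, not_le]
      rwa [this]
    have e1 : ∫ ω in S₂, k ω ∂μ = ∫ ω in S₂, Y1v μ 𝓕 U (τ₀ ω) ω ∂μ := by
      refine setIntegral_congr_fun hS₂ fun ω hω => ?_
      have hlt : τ₀ ω < ρ₀ε ω := hω
      simp only [hkdef, dynkinKernel, if_neg (lt_asymm hlt), if_pos hlt]
    have e2 : ∫ ω in S₂, Y1v μ 𝓕 U (τ₀ ω) ω ∂μ
        ≤ ∫ ω in S₂, ((μ[f₂ | hτ₀.measurableSpace]) ω + 2*ε) ∂μ := by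
      refine setIntegral_mono_on
        ((integrable_of_bdd (M := M) (measurable_Y1v_comp hτ₀m)
          (fun ω => abs_Y1v_le hch hM0 hM _ ω)).integrableOn)
        ((integrable_condExp.add (integrable_const _)).integrableOn) hS₂
        fun ω _ => le_of_lt (hap ω)
    have e3 : ∫ ω in S₂, ((μ[f₂ | hτ₀.measurableSpace]) ω + 2*ε) ∂μ
        ≤ ∫ ω in S₂, f₂ ω ∂μ + 2*ε := by
      rw [integral_add integrable_condExp.integrableOn
        (integrableOn_const (C := 2*ε) (measure_ne_top μ _))]
      rw [setIntegral_condExp hτ₀.measurableSpace_le hf₂int hS₂m']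
      have hμ1 : (μ S₂).toReal ≤ 1 := by
        have := prob_le_one (μ := μ) (s := S₂)
        calc (μ S₂).toReal ≤ (1 : ℝ≥0∞).toReal := ENNReal.toReal_mono ENNReal.one_ne_top this
        _ = 1 := by simp
      have hconst : ∫ _ω in S₂, (2*ε) ∂μ = (μ S₂).toReal * (2*ε) := by
        rw [setIntegral_const, smul_eq_mul]; rfl
      rw [hconst]
      have : (μ S₂).toReal * (2*ε) ≤ 2*ε := by
        calc (μ S₂).toReal * (2*ε) ≤ 1 * (2*ε) :=
          mul_le_mul_of_nonneg_right hμ1 (by linarith)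
        _ = 2*ε := one_mul _
      linarith
    have e4 : ∫ ω in S₂, f₂ ω ∂μ = ∫ ω in S₂, g ω ∂μ := by
      refine setIntegral_congr_fun hS₂ fun ω hω => ?_
      have hlt : τ₀ ω < ρ₀ε ω := hω
      have p1 : play (ρ₀ε, φ) (τ₀, τ₁) ω = φ (τ₀ ω) ω := if_neg (not_le.2 hlt)
      have p2 : play (τ₀, τ₁) (ρ₀ε, φ) ω = τ₀ ω := if_pos (le_of_lt hlt)
      rw [hgdef, hf₂def]
      simp only [p1, p2]
    rw [e1]
    calc ∫ ω in S₂, Y1v μ 𝓕 U (τ₀ ω) ω ∂μ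
        ≤ ∫ ω in S₂, f₂ ω ∂μ + 2*ε := le_trans e2 e3
      _ = ∫ ω in S₂, g ω ∂μ + 2*ε := by rw [e4]
  have hb3 : ∫ ω in (S₁ ∪ S₂)ᶜ, k ω ∂μ = ∫ ω in (S₁ ∪ S₂)ᶜ, g ω ∂μ := by
    refine setIntegral_congr_fun (hS₁.union hS₂).compl fun ω hω => ?_
    rw [Set.mem_compl_iff, Set.mem_union] at hω
    push_neg at hω
    have heq : ρ₀ε ω = τ₀ ω := le_antisymm (not_lt.1 hω.2) (not_lt.1 hω.1)
    have p1 : play (ρ₀ε, φ) (τ₀, τ₁) ω = ρ₀ε ω := if_pos (le_of_eq heq)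
    have p2 : play (τ₀, τ₁) (ρ₀ε, φ) ω = τ₀ ω := if_pos (le_of_eq heq.symm)
    have hn1 : ¬ ρ₀ε ω < τ₀ ω := by rw [heq]; exact lt_irrefl _
    have hn2 : ¬ τ₀ ω < ρ₀ε ω := by rw [heq]; exact lt_irrefl _
    rw [hgdef, hkdef]
    simp only [p1, p2, dynkinKernel, Zv, if_neg hn1, if_neg hn2]
    rw [← heq]
  have hsplit1 := integral_triple_split hS₁ hS₂ hd hgint
  have hsplit2 := integral_triple_split hS₁ hS₂ hd hkint
  have h1 : payoff μ U (ρ₀ε, φ) (τ₀, τ₁) = ∫ ω, g ω ∂μ := rfl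
  have h2 : dynkinV μ (X1v μ 𝓕 U) (Y1v μ 𝓕 U) (Zv U) ρ₀ε τ₀ = ∫ ω, k ω ∂μ := rfl
  rw [h1, h2, hsplit1, hsplit2]
  linarith [hb1, hb2, hb3]

end Claims
section Grid

variable {𝓕 : Filtration ℝ≥0∞ mΩ}

lemma lt_grid_gridIdx {h : ℝ} (hh : 0 < h) {t : ℝ≥0∞} (ht : t ≠ ∞) :
    t < grid h (gridIdx h t) := by
  have h1 : t.toReal / h < (⌊t.toReal / h⌋₊ + 1 : ℝ) := by
    exact_mod_cast Nat.lt_floor_add_one (t.toReal / h)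
  have h2 : t.toReal < (⌊t.toReal / h⌋₊ + 1 : ℝ) * h := (div_lt_iff₀ hh).1 h1
  have h3 : ((gridIdx h t : ℕ) : ℝ) * h = (⌊t.toReal / h⌋₊ + 1 : ℝ) * h := by
    rw [gridIdx]; push_cast; ring
  rw [grid, ENNReal.lt_ofReal_iff_toReal_lt ht, h3]
  exact h2

lemma gridStrat_apply_ne_top {h : ℝ} {bar : ℕ → Ω → ℝ≥0∞} {t : ℝ≥0∞} (ht : t ≠ ∞) :
    gridStrat h bar t = bar (gridIdx h t) := by
  funext ω; simp [gridStrat, ht]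

lemma measurable_gridStrat {h : ℝ} {bar : ℕ → Ω → ℝ≥0∞}
    (hbar : ∀ n, Measurable (bar n)) (t : ℝ≥0∞) : Measurable (gridStrat h bar t) := by
  by_cases ht : t = ∞
  · subst ht
    have : gridStrat h bar ∞ = fun _ => ∞ := funext fun ω => if_pos rfl
    rw [this]; exact measurable_const
  · rw [gridStrat_apply_ne_top ht]; exact hbar _

lemma isTT_gridStrat {h : ℝ} (hh : 0 < h) {bar : ℕ → Ω → ℝ≥0∞}
    (hbar : ∀ n, bar n ∈ STge 𝓕 (fun _ => grid h n)) : IsTT 𝓕 (gridStrat h bar) := by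
  constructor
  · have hbar_m : ∀ n, Measurable (bar n) := fun n => stoppingTime_measurable (hbar n).1
    have hg : Measurable (fun p : ℕ × Ω => bar p.1 p.2) := by
      have hswap : Measurable (fun p : Ω × ℕ => bar p.2 p.1) :=
        measurable_from_prod_countable_left (β := ℕ) (fun n => hbar_m n)
      exact hswap.comp measurable_swap
    have hidx : Measurable (fun t : ℝ≥0∞ => gridIdx h t) := by
      have : Measurable fun t : ℝ≥0∞ => ⌊t.toReal / h⌋₊ :=
        (ENNReal.measurable_toReal.div_const h).nat_floor
      exact this.add_const 1
    have hcond : MeasurableSet {p : ℝ≥0∞ × Ω | p.1 = ∞} :=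
      measurable_fst (measurableSet_singleton ∞)
    have : Measurable fun p : ℝ≥0∞ × Ω =>
        if p.1 = ∞ then (∞ : ℝ≥0∞) else bar (gridIdx h p.1) p.2 := by
      refine Measurable.ite hcond measurable_const ?_
      exact hg.comp ((hidx.comp measurable_fst).prodMk measurable_snd)
    exact this
  · intro t ht
    rw [gridStrat_apply_ne_top ht]
    refine ⟨(hbar _).1, fun ω => lt_of_lt_of_le (lt_grid_gridIdx hh ht) ((hbar _).2 ω)⟩

end Grid
-- AUXEND
end Aux

/-- Proposition 3.3: in the zero-sum case `U¹ = −U² = U`, if `(ρ₀^ε, τ₀^ε)`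
is an `ε`-saddle point for the Dynkin game `V` built from `(X, Y, Z)` and `h` is small enough
that the approximation inequalities hold, then `((ρ₀^ε, ρ_h), (τ₀^ε, τ_h))` is a `5ε`-Nash
equilibrium for the stopping game. -/
theorem zero_sum_nash [Countable Ω] (μ : Measure Ω) [IsProbabilityMeasure μ]
    (𝓕 : Filtration ℝ≥0∞ mΩ) (hsetup : UsualSetup μ 𝓕)
    (U : ℝ≥0∞ → ℝ≥0∞ → Ω → ℝ) (r : ℝ≥0∞ → ℝ) (hU : PayoffAssumption 𝓕 U r)
    (ε h : ℝ) (hε : 0 < ε) (hh : 0 < h)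
    (ρbar τbar : ℕ → Ω → ℝ≥0∞)
    (hρopt : IsOptRho1 μ 𝓕 U ε h ρbar) (hτopt : IsOptTau1 μ 𝓕 U ε h τbar)
    (happrox : ∀ (ρ₀ τ₀ : Ω → ℝ≥0∞) (hρ₀ : IsStoppingTime 𝓕 (fun ω => (ρ₀ ω : WithTop ℝ≥0∞)))
        (hτ₀ : IsStoppingTime 𝓕 (fun ω => (τ₀ ω : WithTop ℝ≥0∞))),
      (∀ᵐ ω ∂μ,
        (μ[fun ω' => U (ρ₀ ω') (evalAt (gridStrat h τbar) ρ₀ ω') ω' |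
          hρ₀.measurableSpace]) ω - 2*ε < X1v μ 𝓕 U (ρ₀ ω) ω) ∧
      (∀ᵐ ω ∂μ,
        Y1v μ 𝓕 U (τ₀ ω) ω <
          (μ[fun ω' => U (evalAt (gridStrat h ρbar) τ₀ ω') (τ₀ ω') ω' |
            hτ₀.measurableSpace]) ω + 2*ε))
    (ρ₀ε τ₀ε : Ω → ℝ≥0∞) (hρ₀ε : IsStoppingTime 𝓕 (fun ω => (ρ₀ε ω : WithTop ℝ≥0∞))) (hτ₀ε : IsStoppingTime 𝓕 (fun ω => (τ₀ε ω : WithTop ℝ≥0∞)))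
    (hsaddle : ∀ ρ₀ τ₀ : Ω → ℝ≥0∞, IsStoppingTime 𝓕 (fun ω => (ρ₀ ω : WithTop ℝ≥0∞)) → IsStoppingTime 𝓕 (fun ω => (τ₀ ω : WithTop ℝ≥0∞)) →
      dynkinV μ (X1v μ 𝓕 U) (Y1v μ 𝓕 U) (Zv U) ρ₀ τ₀ε - ε <
        dynkinV μ (X1v μ 𝓕 U) (Y1v μ 𝓕 U) (Zv U) ρ₀ε τ₀ε ∧
      dynkinV μ (X1v μ 𝓕 U) (Y1v μ 𝓕 U) (Zv U) ρ₀ε τ₀ε <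
        dynkinV μ (X1v μ 𝓕 U) (Y1v μ 𝓕 U) (Zv U) ρ₀ε τ₀ + ε) :
    IsStrategy 𝓕 (ρ₀ε, gridStrat h ρbar) ∧ IsStrategy 𝓕 (τ₀ε, gridStrat h τbar) ∧
    ∀ ρ τ : (Ω → ℝ≥0∞) × (ℝ≥0∞ → Ω → ℝ≥0∞), IsStrategy 𝓕 ρ → IsStrategy 𝓕 τ →
      payoff μ U ρ (τ₀ε, gridStrat h τbar) ≤
        payoff μ U (ρ₀ε, gridStrat h ρbar) (τ₀ε, gridStrat h τbar) + 5*ε ∧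
      payoff μ (fun s t ω => -U s t ω) (ρ₀ε, gridStrat h ρbar) τ ≤
        payoff μ (fun s t ω => -U s t ω) (ρ₀ε, gridStrat h ρbar)
          (τ₀ε, gridStrat h τbar) + 5*ε := by
  classical
  obtain ⟨hch, -, -, -⟩ := hsetup
  obtain ⟨⟨M₀, hM₀⟩, hUmeas, -⟩ := hU
  set M : ℝ := max M₀ 0 with hMdef
  have hM : ∀ s t ω, |U s t ω| ≤ M := fun s t ω => le_trans (hM₀ s t ω) (le_max_left _ _)
  have hM0 : (0:ℝ) ≤ M := le_max_right _ _
  have hUm : ∀ s t : ℝ≥0∞, Measurable (U s t) := fun s t =>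
    (hUmeas s t).mono (𝓕.le _) le_rfl
  have hρTT : IsTT 𝓕 (gridStrat h ρbar) := isTT_gridStrat hh fun n => (hρopt n).1
  have hτTT : IsTT 𝓕 (gridStrat h τbar) := isTT_gridStrat hh fun n => (hτopt n).1
  have hρbar_m : ∀ t, Measurable (gridStrat h ρbar t) :=
    measurable_gridStrat fun n => stoppingTime_measurable ((hρopt n).1.1)
  have hτbar_m : ∀ t, Measurable (gridStrat h τbar t) :=
    measurable_gridStrat fun n => stoppingTime_measurable ((hτopt n).1.1)
  have hε' : (0:ℝ) ≤ ε := le_of_lt hε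
  refine ⟨⟨hρ₀ε, hρTT⟩, ⟨hτ₀ε, hτTT⟩, ?_⟩
  intro ρ τ hρ hτ
  have hρ₂m : ∀ t, Measurable (ρ.2 t) := fun t =>
    hρ.2.1.comp (measurable_const.prodMk measurable_id)
  have hτ₂m : ∀ t, Measurable (τ.2 t) := fun t =>
    hτ.2.1.comp (measurable_const.prodMk measurable_id)
  -- the five elementary inequalities
  have I1 : payoff μ U (ρ.1, ρ.2) (τ₀ε, gridStrat h τbar) ≤
      dynkinV μ (X1v μ 𝓕 U) (Y1v μ 𝓕 U) (Zv U) ρ.1 τ₀ε + 2*ε :=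
    lemA (M := M) hch hM0 hM hUm hρ.1 hτ₀ε hρ₂m hρ.2.2 hτbar_m hε'
      (ae_to_all hch ((happrox ρ.1 τ₀ε hρ.1 hτ₀ε).1))
  have I2 : payoff μ U (ρ₀ε, gridStrat h ρbar) (τ₀ε, gridStrat h τbar) ≤
      dynkinV μ (X1v μ 𝓕 U) (Y1v μ 𝓕 U) (Zv U) ρ₀ε τ₀ε + 2*ε :=
    lemA (M := M) hch hM0 hM hUm hρ₀ε hτ₀ε hρbar_m hρTT.2 hτbar_m hε'
      (ae_to_all hch ((happrox ρ₀ε τ₀ε hρ₀ε hτ₀ε).1))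
  have I3 : dynkinV μ (X1v μ 𝓕 U) (Y1v μ 𝓕 U) (Zv U) ρ₀ε τ₀ε ≤
      payoff μ U (ρ₀ε, gridStrat h ρbar) (τ₀ε, gridStrat h τbar) + 2*ε :=
    lemA' (M := M) hch hM0 hM hUm hρ₀ε hτ₀ε hτbar_m hτTT.2 hρbar_m hε'
      (ae_to_all hch ((happrox ρ₀ε τ₀ε hρ₀ε hτ₀ε).2))
  have I4 : dynkinV μ (X1v μ 𝓕 U) (Y1v μ 𝓕 U) (Zv U) ρ₀ε τ.1 ≤
      payoff μ U (ρ₀ε, gridStrat h ρbar) (τ.1, τ.2) + 2*ε :=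
    lemA' (M := M) hch hM0 hM hUm hρ₀ε hτ.1 hτ₂m hτ.2.2 hρbar_m hε'
      (ae_to_all hch ((happrox ρ₀ε τ.1 hρ₀ε hτ.1).2))
  have S1 := (hsaddle ρ.1 τ.1 hρ.1 hτ.1).1
  have S2 := (hsaddle ρ.1 τ.1 hρ.1 hτ.1).2
  constructor
  · -- player 1
    have : payoff μ U ρ (τ₀ε, gridStrat h τbar) =
        payoff μ U (ρ.1, ρ.2) (τ₀ε, gridStrat h τbar) := by rfl
    rw [this]
    linarith [I1, I3, S1]
  · -- player 2
    have hneg1 : payoff μ (fun s t ω => -U s t ω) (ρ₀ε, gridStrat h ρbar) τ =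
        - payoff μ U (ρ₀ε, gridStrat h ρbar) (τ.1, τ.2) := by
      rw [payoff, payoff, ← integral_neg]
    have hneg2 : payoff μ (fun s t ω => -U s t ω) (ρ₀ε, gridStrat h ρbar)
        (τ₀ε, gridStrat h τbar) =
        - payoff μ U (ρ₀ε, gridStrat h ρbar) (τ₀ε, gridStrat h τbar) := by
      rw [payoff, payoff, ← integral_neg]
    rw [hneg1, hneg2]
    linarith [I2, I4, S2]

end StoppingGames
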